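/- Let O be a local ring and r a nonnegative integer. Let M be a matrix with r+2 rows and r+1 columns with entries in O, let M_1 be the submatrix obtained by removing the last row of M, and M_2 the submatrix obtained by removing the last two rows. Assume that the matrix obtained from M_1 by reducing entries modulo the maximal ideal has rank at least r. Let z := det M_1. Then there exist u, v ∈ O such that: (1) the ideal (z, u) equals the ideal of all maximal (r×r) minors of M_2; (2) the ideal (z, v) equals the ideal of all maximal ((r+1)×(r+1)) minors of M; and (3) the ideal (z, uv) equals the ideal generated by the two maximal minors of M obtained by removing the last row and by removing the last-but-one row, respectively. -/

import Mathlib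

open Matrix

section DetHelpers

variable {R : Type*} [CommRing R] {ι : Type*} [Fintype ι] [DecidableEq ι]

private lemma pi_single_sum (x : ι → R) : x = ∑ i, Pi.single i (x i) := by
  funext j
  rw [Finset.sum_apply]
  simp [Pi.single_apply]

private lemma single_eq_smul_single (p : ι) (c : R) :
    Pi.single p c = c • (Pi.single p 1 : ι → R) := by
  funext k
  simp [Pi.single_apply]

private lemma updateRow_updateRow_comm (A : Matrix ι ι R) {i i' : ι} (h : i ≠ i')
    (x y : ι → R) :
    (A.updateRow i x).updateRow i' y = (A.updateRow i' y).updateRow i x := by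
  ext a b
  by_cases h1 : a = i' <;> by_cases h2 : a = i <;>
    simp_all [Matrix.updateRow_apply]

private lemma det_updateRow_finset_sum {κ : Type*} (A : Matrix ι ι R) (j : ι)
    (s : Finset κ) (f : κ → ι → R) :
    (A.updateRow j (∑ k ∈ s, f k)).det = ∑ k ∈ s, (A.updateRow j (f k)).det := by
  classical
  induction s using Finset.induction_on with
  | empty =>
      simp only [Finset.sum_empty]
      exact Matrix.det_eq_zero_of_row_eq_zero j (fun k => by simp)
  | @insert a s hk ih =>
      rw [Finset.sum_insert hk, Matrix.det_updateRow_add, ih, Finset.sum_insert hk]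

private lemma row_single_eq_one (p : ι) :
    Pi.single p (1 : R) = (1 : Matrix ι ι R) p := by
  funext k
  simp [Matrix.one_apply, Pi.single_apply, eq_comm]

private lemma det_one_updateRow_single (j p : ι) (c : R) :
    ((1 : Matrix ι ι R).updateRow j (Pi.single p c)).det = if p = j then c else 0 := by
  rw [single_eq_smul_single, Matrix.det_updateRow_smul]
  rcases eq_or_ne p j with rfl | hp
  · rw [row_single_eq_one, Matrix.updateRow_eq_self]
    simp
  · rw [if_neg hp, Matrix.det_zero_of_row_eq (Ne.symm hp)
      (by rw [Matrix.updateRow_self, Matrix.updateRow_ne hp, ← row_single_eq_one]),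
      mul_zero]

private lemma det_one_updateRow (x : ι → R) (j : ι) :
    ((1 : Matrix ι ι R).updateRow j x).det = x j := by
  conv_lhs => rw [pi_single_sum x, det_updateRow_finset_sum]
  rw [Finset.sum_congr rfl (fun p _ => det_one_updateRow_single j p (x p))]
  simp

private lemma det_one_swap {j j' : ι} (h : j ≠ j') :
    (((1 : Matrix ι ι R).updateRow j (Pi.single j' 1)).updateRow j'
      (Pi.single j 1)).det = -1 := by
  have hM : ((1 : Matrix ι ι R).updateRow j (Pi.single j' 1)).updateRow j'
      (Pi.single j 1) = (1 : Matrix ι ι R).submatrix (Equiv.swap j j') id := by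
    funext a b
    rw [Matrix.submatrix_apply, id_eq]
    rcases eq_or_ne a j' with rfl | h1
    · simp [Equiv.swap_apply_right, Matrix.one_apply, Pi.single_apply, eq_comm]
    · rcases eq_or_ne a j with rfl | h2
      · simp [Matrix.updateRow_ne h1, Equiv.swap_apply_left, Matrix.one_apply,
          Pi.single_apply, eq_comm]
      · rw [Matrix.updateRow_ne h1, Matrix.updateRow_ne h2,
          Equiv.swap_apply_of_ne_of_ne h2 h1]
  rw [hM, Matrix.det_permute]
  simp [Equiv.Perm.sign_swap h]

private lemma det_one_updateRow_updateRow (x y : ι → R) {j j' : ι} (h : j ≠ j') :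
    (((1 : Matrix ι ι R).updateRow j x).updateRow j' y).det
      = x j * y j' - x j' * y j := by
  conv_lhs => rw [pi_single_sum y, det_updateRow_finset_sum]
  have key : ∀ q, (((1 : Matrix ι ι R).updateRow j x).updateRow j'
        (Pi.single q (y q))).det
      = (if q = j then -(x j' * y q) else 0) + (if q = j' then x j * y q else 0) := by
    intro q
    rcases eq_or_ne q j' with rfl | h1
    · rw [if_neg (Ne.symm h), if_pos rfl, single_eq_smul_single,
        Matrix.det_updateRow_smul]
      have hrow : Pi.single q (1 : R) = ((1 : Matrix ι ι R).updateRow j x) q := by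
        rw [Matrix.updateRow_ne (Ne.symm h), ← row_single_eq_one]
      rw [hrow, Matrix.updateRow_eq_self, det_one_updateRow]
      ring
    · by_cases h2 : q = j
      · subst h2
        rw [if_pos rfl, if_neg h1, single_eq_smul_single, Matrix.det_updateRow_smul,
          updateRow_updateRow_comm _ h]
        conv_lhs => rw [pi_single_sum x, det_updateRow_finset_sum]
        have hp : ∀ p, (((1 : Matrix ι ι R).updateRow j' (Pi.single q 1)).updateRow q
            (Pi.single p (x p))).det = if p = j' then -(x p) else 0 := by
          intro p
          rcases eq_or_ne p j' with rfl | hp1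
          · rw [if_pos rfl, single_eq_smul_single p (x p), Matrix.det_updateRow_smul,
              det_one_swap (Ne.symm h)]
            ring
          · rw [if_neg hp1, single_eq_smul_single p (x p), Matrix.det_updateRow_smul]
            by_cases hp2 : p = q
            · rw [Matrix.det_zero_of_row_eq h
                (by rw [Matrix.updateRow_self, Matrix.updateRow_ne (Ne.symm h1),
                  Matrix.updateRow_self, hp2]), mul_zero]
            · rw [Matrix.det_zero_of_row_eq (Ne.symm hp2)
                (by rw [Matrix.updateRow_self, Matrix.updateRow_ne hp2,
                  Matrix.updateRow_ne hp1, ← row_single_eq_one]), mul_zero]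
        rw [Finset.sum_congr rfl (fun p _ => hp p)]
        simp only [Finset.sum_ite_eq', Finset.mem_univ, if_pos]
        ring
      · rw [if_neg h2, if_neg h1, single_eq_smul_single, Matrix.det_updateRow_smul,
          Matrix.det_zero_of_row_eq (Ne.symm h1)
            (by rw [Matrix.updateRow_self, Matrix.updateRow_ne h1,
              Matrix.updateRow_ne h2, ← row_single_eq_one]), mul_zero, add_zero]
  rw [Finset.sum_congr rfl (fun q _ => key q), Finset.sum_add_distrib]
  simp only [Finset.sum_ite_eq', Finset.mem_univ, if_pos]
  ring

private lemma det_one_updateColumn_updateColumn (x y : ι → R) {j j' : ι} (h : j ≠ j') :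
    (((1 : Matrix ι ι R).updateCol j x).updateCol j' y).det
      = x j * y j' - x j' * y j := by
  rw [← Matrix.det_transpose, ← Matrix.updateRow_transpose, ← Matrix.updateRow_transpose,
    Matrix.transpose_one]
  exact det_one_updateRow_updateRow x y h

private lemma mul_updateColumn (B A : Matrix ι ι R) (j : ι) (b : ι → R) :
    B * (A.updateCol j b) = (B * A).updateCol j (B *ᵥ b) := by
  ext i k
  by_cases hk : k = j
  · subst hk
    simp [Matrix.mul_apply, Matrix.updateCol_apply, Matrix.mulVec, dotProduct]
  · simp [Matrix.mul_apply, Matrix.updateCol_apply, hk]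

end DetHelpers

section KeyIdentity

open Matrix

private lemma key_identity_field {K : Type*} [Field K] {n : ℕ}
    (A : Matrix (Fin n) (Fin n) K) (hA : A.det ≠ 0) (b₁ b₂ : Fin n → K)
    {j j' : Fin n} (h : j ≠ j') :
    (A.updateCol j b₁).det * (A.updateCol j' b₂).det
      - (A.updateCol j' b₁).det * (A.updateCol j b₂).det
      = A.det * ((A.updateCol j b₁).updateCol j' b₂).det := by
  have hu : IsUnit A.det := hA.isUnit
  have hdet : ∀ (b : Fin n → K) (i : Fin n),
      (A.updateCol i b).det = A.det * (A⁻¹ *ᵥ b) i := by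
    intro b i
    have hb : A *ᵥ (A⁻¹ *ᵥ b) = b := by
      rw [Matrix.mulVec_mulVec, Matrix.mul_nonsing_inv _ hu, Matrix.one_mulVec]
    conv_lhs => rw [← hb]
    rw [← Matrix.cramer_apply, Matrix.cramer_eq_adjugate_mulVec, Matrix.mulVec_mulVec,
      Matrix.adjugate_mul, Matrix.smul_mulVec, Matrix.one_mulVec]
    simp
  have hC : ((A.updateCol j b₁).updateCol j' b₂).det
      = A.det * ((A⁻¹ *ᵥ b₁) j * (A⁻¹ *ᵥ b₂) j' - (A⁻¹ *ᵥ b₁) j' * (A⁻¹ *ᵥ b₂) j) := by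
    have h1 : A⁻¹ * ((A.updateCol j b₁).updateCol j' b₂)
        = ((1 : Matrix (Fin n) (Fin n) K).updateCol j (A⁻¹ *ᵥ b₁)).updateCol j'
            (A⁻¹ *ᵥ b₂) := by
      rw [mul_updateColumn, mul_updateColumn, Matrix.nonsing_inv_mul _ hu]
    have h2 := congrArg Matrix.det h1
    rw [Matrix.det_mul, Matrix.det_nonsing_inv, Ring.inverse_eq_inv,
      det_one_updateColumn_updateColumn _ _ h] at h2
    have h3 := congrArg (fun t => A.det * t) h2
    simpa [← mul_assoc, mul_inv_cancel₀ hA] using h3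
  rw [hdet b₁ j, hdet b₂ j', hdet b₁ j', hdet b₂ j, hC]
  ring

private lemma key_identity {R : Type*} [CommRing R] {n : ℕ}
    (A : Matrix (Fin n) (Fin n) R) (b₁ b₂ : Fin n → R) {j j' : Fin n} (h : j ≠ j') :
    (A.updateCol j b₁).det * (A.updateCol j' b₂).det
      - (A.updateCol j' b₁).det * (A.updateCol j b₂).det
      = A.det * ((A.updateCol j b₁).updateCol j' b₂).det := by
  classical
  let Ag : Matrix (Fin n) (Fin n) (MvPolynomial ((Fin n × Fin n) ⊕ (Bool × Fin n)) ℤ) :=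
    Matrix.of fun i k => MvPolynomial.X (Sum.inl (i, k))
  let bg : Bool → Fin n → MvPolynomial ((Fin n × Fin n) ⊕ (Bool × Fin n)) ℤ :=
    fun s i => MvPolynomial.X (Sum.inr (s, i))
  have hP : (Ag.updateCol j (bg false)).det * (Ag.updateCol j' (bg true)).det
      - (Ag.updateCol j' (bg false)).det * (Ag.updateCol j (bg true)).det
      = Ag.det * ((Ag.updateCol j (bg false)).updateCol j' (bg true)).det := by
    have hAg : Ag.det ≠ 0 := by
      intro hzero
      have h1 := congrArg
        (MvPolynomial.eval (Sum.elim (fun p => if p.1 = p.2 then (1 : ℤ) else 0)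
          (fun _ => 0))) hzero
      rw [map_zero] at h1
      rw [RingHom.map_det, RingHom.mapMatrix_apply] at h1
      have h2 : Ag.map (MvPolynomial.eval (Sum.elim
          (fun p => if p.1 = p.2 then (1 : ℤ) else 0) (fun _ => 0)))
          = (1 : Matrix (Fin n) (Fin n) ℤ) := by
        ext i k
        simp [Ag, Matrix.one_apply]
      rw [h2, Matrix.det_one] at h1
      exact one_ne_zero h1
    have hinj : Function.Injective (algebraMap (MvPolynomial ((Fin n × Fin n) ⊕ (Bool × Fin n)) ℤ) (FractionRing (MvPolynomial ((Fin n × Fin n) ⊕ (Bool × Fin n)) ℤ))) :=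
      IsFractionRing.injective _ _
    apply hinj
    have hmapdet : ∀ (X : Matrix (Fin n) (Fin n) (MvPolynomial ((Fin n × Fin n) ⊕ (Bool × Fin n)) ℤ)),
        (algebraMap (MvPolynomial ((Fin n × Fin n) ⊕ (Bool × Fin n)) ℤ) (FractionRing (MvPolynomial ((Fin n × Fin n) ⊕ (Bool × Fin n)) ℤ))) X.det
          = (X.map (algebraMap (MvPolynomial ((Fin n × Fin n) ⊕ (Bool × Fin n)) ℤ) (FractionRing (MvPolynomial ((Fin n × Fin n) ⊕ (Bool × Fin n)) ℤ)))).det :=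
      fun X => RingHom.map_det _ X
    simp only [map_sub, _root_.map_mul, hmapdet, Matrix.map_updateCol]
    have hd : (Ag.map (algebraMap (MvPolynomial ((Fin n × Fin n) ⊕ (Bool × Fin n)) ℤ) (FractionRing (MvPolynomial ((Fin n × Fin n) ⊕ (Bool × Fin n)) ℤ)))).det ≠ 0 := by
      rw [← hmapdet]
      intro hzero
      exact hAg (hinj (by rwa [map_zero]))
    exact key_identity_field _ hd _ _ h
  let φ : MvPolynomial ((Fin n × Fin n) ⊕ (Bool × Fin n)) ℤ →+* R := MvPolynomial.eval₂Hom (Int.castRingHom R)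
    (Sum.elim (fun p => A p.1 p.2) (fun q => if q.1 then b₂ q.2 else b₁ q.2))
  have hAφ : Ag.map φ = A := by
    ext i k
    simp [Ag, φ, MvPolynomial.eval₂Hom_X']
  have hb₁ : (φ ∘ bg false) = b₁ := by
    funext i; simp [bg, φ, MvPolynomial.eval₂Hom_X']
  have hb₂ : (φ ∘ bg true) = b₂ := by
    funext i; simp [bg, φ, MvPolynomial.eval₂Hom_X']
  have hfin := congrArg φ hP
  simp only [map_sub, _root_.map_mul, RingHom.map_det, RingHom.mapMatrix_apply,
    Matrix.map_updateCol, hAφ, hb₁, hb₂] at hfin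
  exact hfin

private lemma cr_identity {R : Type*} [CommRing R] {n : ℕ}
    (N : Matrix (Fin n) (Fin n) R) (b₁ b₂ : Fin n → R) (j j' : Fin n) :
    (N.updateRow j b₁).det * (N.updateRow j' b₂).det
      - (N.updateRow j' b₁).det * (N.updateRow j b₂).det ∈ Ideal.span {N.det} := by
  rcases eq_or_ne j j' with rfl | h
  · simp
  · have e : ∀ (b : Fin n → R) (i : Fin n),
        (Nᵀ.updateCol i b).det = (N.updateRow i b).det := by
      intro b i
      rw [← Matrix.det_transpose (Nᵀ.updateCol i b), ← Matrix.updateRow_transpose,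
        Matrix.transpose_transpose]
    have hid := key_identity Nᵀ b₁ b₂ h
    rw [e, e, e, e, Matrix.det_transpose] at hid
    rw [hid]
    exact Ideal.mem_span_singleton.mpr (Dvd.intro _ rfl)

end KeyIdentity

section RankCrux

open Matrix

private lemma mulVec_insertNth {K : Type*} [CommRing K] {m n : ℕ}
    (S : Matrix (Fin m) (Fin (n + 1)) K) (c : Fin (n + 1)) (w : Fin n → K) :
    S *ᵥ (c.insertNth (0 : K) w) = (S.submatrix id c.succAbove) *ᵥ w := by
  funext i
  rw [Matrix.mulVec, dotProduct, Fin.sum_univ_succAbove _ c]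
  simp [Matrix.mulVec, dotProduct]

private lemma aux_ker {K : Type*} [Field K] {m n : ℕ}
    (S : Matrix (Fin m) (Fin (n + 1)) K) (h : n ≤ S.rank) :
    ∃ c : Fin (n + 1), ∀ w : Fin n → K,
      (S.submatrix id c.succAbove) *ᵥ w = 0 → w = 0 := by
  classical
  have hrn : S.rank + Module.finrank K (LinearMap.ker S.mulVecLin) = n + 1 := by
    have h1 := LinearMap.finrank_range_add_finrank_ker S.mulVecLin
    rw [Module.finrank_fin_fun] at h1
    exact h1
  have hker : Module.finrank K (LinearMap.ker S.mulVecLin) ≤ 1 := by omega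
  obtain ⟨g, hg⟩ := finrank_le_one_iff.mp hker
  have key : ∀ c : Fin (n + 1), (g : Fin (n + 1) → K) c ≠ 0 ∨ (g : Fin (n + 1) → K) = 0 →
      True := fun _ _ => trivial
  have main : ∀ c : Fin (n + 1),
      ((g : Fin (n + 1) → K) = 0 ∨ (g : Fin (n + 1) → K) c ≠ 0) →
      ∀ w : Fin n → K, (S.submatrix id c.succAbove) *ᵥ w = 0 → w = 0 := by
    intro c hc w hw
    let w' : Fin (n + 1) → K := c.insertNth (0 : K) w
    have hmem : w' ∈ LinearMap.ker S.mulVecLin := by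
      rw [LinearMap.mem_ker, Matrix.mulVecLin_apply]
      show S *ᵥ (c.insertNth (0 : K) w) = 0
      rw [mulVec_insertNth, hw]
    obtain ⟨a, ha⟩ := hg ⟨_, hmem⟩
    have hval : a • (g : Fin (n + 1) → K) = w' := congrArg Subtype.val ha
    have hz : w' = 0 := by
      rcases hc with hc | hc
      · rw [← hval, hc, smul_zero]
      · have h0 : w' c = 0 := @Fin.insertNth_apply_same _ (fun _ => K) c 0 w
        have hag : a * (g : Fin (n + 1) → K) c = 0 := by
          rw [← hval] at h0
          exact h0
        have ha0 : a = 0 := by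
          rcases mul_eq_zero.mp hag with h' | h'
          · exact h'
          · exact absurd h' hc
        rw [← hval, ha0, zero_smul]
    funext i
    have hzi := congrFun hz (c.succAbove i)
    have hws : w' (c.succAbove i) = w i :=
      @Fin.insertNth_apply_succAbove _ (fun _ => K) c 0 w i
    rw [hws] at hzi
    exact hzi
  by_cases hg0 : (g : Fin (n + 1) → K) = 0
  · exact ⟨0, main 0 (Or.inl hg0)⟩
  · obtain ⟨c, hc⟩ : ∃ c, (g : Fin (n + 1) → K) c ≠ 0 := by
      by_contra hall
      push_neg at hall
      exact hg0 (funext hall)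
    exact ⟨c, main c (Or.inr hc)⟩

private lemma exists_minor_ne {K : Type*} [Field K] {n : ℕ}
    (A : Matrix (Fin (n + 1)) (Fin (n + 1)) K) (h : n ≤ A.rank) :
    ∃ k c : Fin (n + 1), (A.submatrix k.succAbove c.succAbove).det ≠ 0 := by
  classical
  obtain ⟨c, hc⟩ := aux_ker A h
  have hinj : Function.Injective (A.submatrix id c.succAbove).mulVecLin := by
    rw [← LinearMap.ker_eq_bot, LinearMap.ker_eq_bot']
    intro w hw
    exact hc w (by rwa [Matrix.mulVecLin_apply] at hw)
  have hrank1 : (A.submatrix id c.succAbove).rank = n := by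
    rw [Matrix.rank, LinearMap.finrank_range_of_inj hinj, Module.finrank_fin_fun]
  have hT : n ≤ (A.submatrix id c.succAbove)ᵀ.rank := by
    rw [Matrix.rank_transpose, hrank1]
  obtain ⟨k, hk⟩ := aux_ker (A.submatrix id c.succAbove)ᵀ hT
  refine ⟨k, c, fun hdet => ?_⟩
  have he : (A.submatrix id c.succAbove)ᵀ.submatrix id k.succAbove
      = (A.submatrix k.succAbove c.succAbove)ᵀ := by
    ext i j
    simp
  have hdet' : ((A.submatrix id c.succAbove)ᵀ.submatrix id k.succAbove).det = 0 := by
    rw [he, Matrix.det_transpose, hdet]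
  obtain ⟨v, hv0, hv⟩ := (Matrix.exists_mulVec_eq_zero_iff).mpr hdet'
  exact hv0 (hk v hv)

private lemma exists_isUnit_minor {O : Type*} [CommRing O] [IsLocalRing O] {n : ℕ}
    (N : Matrix (Fin (n + 1)) (Fin (n + 1)) O)
    (h : n ≤ (N.map (IsLocalRing.residue O)).rank) :
    ∃ k c : Fin (n + 1), IsUnit ((N.submatrix k.succAbove c.succAbove).det) := by
  obtain ⟨k, c, hkc⟩ := exists_minor_ne _ h
  refine ⟨k, c, ?_⟩
  rw [← IsLocalRing.notMem_maximalIdeal]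
  intro hmem
  apply hkc
  have hsub : (N.map (IsLocalRing.residue O)).submatrix k.succAbove c.succAbove
      = (N.submatrix k.succAbove c.succAbove).map (IsLocalRing.residue O) :=
    (Matrix.submatrix_map _ _ _ _).symm
  rw [hsub, ← RingHom.mapMatrix_apply, ← RingHom.map_det]
  exact Ideal.Quotient.eq_zero_iff_mem.mpr hmem

end RankCrux

section Bridges

open Matrix

variable {R : Type*} [CommRing R]

private lemma updateRow_single_det {n : ℕ} (N : Matrix (Fin (n + 1)) (Fin (n + 1)) R)
    (c j : Fin (n + 1)) :
    (N.updateRow j (Pi.single c 1)).det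
      = (-1) ^ ((j : ℕ) + (c : ℕ)) * (N.submatrix j.succAbove c.succAbove).det := by
  rw [Matrix.det_succ_row _ j, Finset.sum_eq_single c
    (fun b _ hb => by simp [Matrix.updateRow_self, Pi.single_eq_of_ne hb])
    (fun hc => absurd (Finset.mem_univ c) hc)]
  have hsub : (N.updateRow j (Pi.single c 1)).submatrix j.succAbove c.succAbove
      = N.submatrix j.succAbove c.succAbove := by
    ext i k
    rw [Matrix.submatrix_apply, Matrix.updateRow_ne (Fin.succAbove_ne j i),
      Matrix.submatrix_apply]
  rw [hsub]
  simp [Matrix.updateRow_self]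

private lemma bgen_eq {r : ℕ} (M : Matrix (Fin (r + 2)) (Fin (r + 1)) R)
    (c : Fin (r + 1)) :
    ((M.submatrix (fun i : Fin r => i.castSucc.castSucc) id).submatrix id c.succAbove).det
      = ((M.submatrix Fin.castSucc id).submatrix (Fin.last r).succAbove c.succAbove).det := by
  congr 1
  ext i k
  simp [Fin.succAbove_last]

private lemma agen_castSucc {r : ℕ} (M : Matrix (Fin (r + 2)) (Fin (r + 1)) R)
    (j : Fin (r + 1)) :
    (M.submatrix (j.castSucc).succAbove id).det
      = (-1) ^ (r + (j : ℕ)) *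
        ((M.submatrix Fin.castSucc id).updateRow j (M (Fin.last (r + 1)))).det := by
  rw [Matrix.det_succ_row _ (Fin.last r), Matrix.det_succ_row _ j, Finset.mul_sum]
  refine Finset.sum_congr rfl (fun c _ => ?_)
  have hrow : (j.castSucc).succAbove (Fin.last r) = Fin.last (r + 1) := by
    rw [Fin.succAbove_of_le_castSucc _ _ (by
      simpa [Fin.le_def] using Fin.is_le j), Fin.succ_last]
  have hsub : (M.submatrix (j.castSucc).succAbove id).submatrix
        (Fin.last r).succAbove c.succAbove
      = ((M.submatrix Fin.castSucc id).updateRow j (M (Fin.last (r + 1)))).submatrix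
        j.succAbove c.succAbove := by
    ext i k
    simp only [Matrix.submatrix_apply, id_eq]
    rw [Matrix.updateRow_ne (Fin.succAbove_ne j i), Matrix.submatrix_apply]
    simp [Fin.succAbove_last]
  have hent : (M.submatrix (j.castSucc).succAbove id) (Fin.last r) c
      = M (Fin.last (r + 1)) c := by
    rw [Matrix.submatrix_apply, hrow, id_eq]
  have hent2 : ((M.submatrix Fin.castSucc id).updateRow j (M (Fin.last (r + 1)))) j c
      = M (Fin.last (r + 1)) c := by
    rw [Matrix.updateRow_self]
  rw [hsub, hent, hent2, Fin.val_last]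
  have hsign : (-1 : R) ^ (r + (j : ℕ)) * (-1) ^ ((j : ℕ) + (c : ℕ))
      = (-1) ^ (r + (c : ℕ)) := by
    rw [← pow_add, show r + (j : ℕ) + ((j : ℕ) + (c : ℕ)) = 2 * (j : ℕ) + (r + (c : ℕ))
      from by ring, pow_add, pow_mul, neg_one_sq, one_pow, one_mul]
  rw [← hsign]
  ring

end Bridges

/-- Lemma 5.3 of the paper.
Let `O` be a (commutative) local ring and `r` a nonnegative integer.  Let `M`
be a matrix with `r+2` rows and `r+1` columns and entries in `O`, let `M₁` be
the submatrix obtained by removing the last row of `M` (here realised as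
`M.submatrix Fin.castSucc id`), and `M₂` the submatrix obtained by removing
the last two rows (realised as `M.submatrix (fun i => i.castSucc.castSucc) id`).
Assume that the matrix obtained from `M₁` by reducing its entries modulo the
maximal ideal has rank at least `r` over the residue field.  Let
`z := det M₁`.  Then there exist `u, v ∈ O` such that:
1. the ideal `(z, u)` equals the ideal of all maximal (`r × r`) minors of
   `M₂` (the determinants of the square submatrices obtained by deleting one
   column, `c.succAbove` being the embedding skipping the column `c`);
2. the ideal `(z, v)` equals the ideal of all maximal (`(r+1) × (r+1)`)
   minors of `M` (the determinants of the square submatrices obtained by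
   deleting one row, `k.succAbove` being the embedding skipping the row `k`);
3. the ideal `(z, u*v)` equals the ideal generated by the two maximal minors
   of `M` obtained by removing the last row (which gives `z`) and by removing
   the last-but-one row (the row of index `r`, i.e. `(Fin.last r).castSucc`). -/
theorem minors_of_local_matrix {O : Type*} [CommRing O] [IsLocalRing O]
    (r : ℕ) (M : Matrix (Fin (r + 2)) (Fin (r + 1)) O)
    (hrank : r ≤ ((M.submatrix Fin.castSucc id).map (IsLocalRing.residue O)).rank) :
    ∃ u v : O,
      Ideal.span {(M.submatrix Fin.castSucc id).det, u}
        = Ideal.span (Set.range fun c : Fin (r + 1) =>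
            ((M.submatrix (fun i : Fin r => i.castSucc.castSucc) id).submatrix
              id c.succAbove).det) ∧
      Ideal.span {(M.submatrix Fin.castSucc id).det, v}
        = Ideal.span (Set.range fun k : Fin (r + 2) =>
            (M.submatrix k.succAbove id).det) ∧
      Ideal.span {(M.submatrix Fin.castSucc id).det, u * v}
        = Ideal.span {(M.submatrix Fin.castSucc id).det,
            (M.submatrix ((Fin.last r).castSucc.succAbove) id).det} := by
  classical
  obtain ⟨k₀, c₀, hU⟩ := exists_isUnit_minor (M.submatrix Fin.castSucc id) hrank
  set N : Matrix (Fin (r + 1)) (Fin (r + 1)) O := M.submatrix Fin.castSucc id with hN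
  set mrow : Fin (r + 1) → O := M (Fin.last (r + 1)) with hmrow
  set U : O := ((M.submatrix (fun i : Fin r => i.castSucc.castSucc) id).submatrix
      id c₀.succAbove).det with huU
  set V : O := (M.submatrix (k₀.castSucc).succAbove id).det with hvV
  have hsq : ∀ (e : ℕ) (x : O), (-1 : O) ^ e * ((-1 : O) ^ e * x) = x := by
    intro e x
    rw [← mul_assoc, ← pow_add, ← two_mul, pow_mul, neg_one_sq, one_pow, one_mul]
  have hUB : IsUnit ((N.updateRow k₀ (Pi.single c₀ 1)).det) := by
    rw [updateRow_single_det]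
    exact ((isUnit_one.neg).pow _).mul hU
  have KD : ∀ (b₁ b₂ : Fin (r + 1) → O) (j j' : Fin (r + 1)),
      (N.updateRow j b₁).det * (N.updateRow j' b₂).det
        - (N.updateRow j' b₁).det * (N.updateRow j b₂).det ∈ Ideal.span {N.det} :=
    fun b₁ b₂ j j' => cr_identity N b₁ b₂ j j'
  have hBlast : ∀ c : Fin (r + 1), (N.updateRow (Fin.last r) (Pi.single c 1)).det
      = (-1 : O) ^ (r + (c : ℕ)) *
        ((M.submatrix (fun i : Fin r => i.castSucc.castSucc) id).submatrix
          id c.succAbove).det := by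
    intro c
    have h2 := bgen_eq M c
    rw [← hN] at h2
    rw [updateRow_single_det, ← h2, Fin.val_last]
  have hsrow : ∀ j : Fin (r + 1), (M.submatrix (j.castSucc).succAbove id).det
      = (-1 : O) ^ (r + (j : ℕ)) * (N.updateRow j mrow).det := by
    intro j
    have h1 := agen_castSucc M j
    rw [← hN, ← hmrow] at h1
    exact h1
  have hlastgen : (M.submatrix (Fin.last (r + 1)).succAbove id).det = N.det := by
    rw [hN]
    congr 1
    ext i k
    simp [Fin.succAbove_last]
  have hskey : (N.updateRow k₀ mrow).det = (-1 : O) ^ (r + (k₀ : ℕ)) * V := by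
    rw [hvV, hsrow k₀, hsq]
  have hU2 : U = (-1 : O) ^ (r + (c₀ : ℕ)) *
      (N.updateRow (Fin.last r) (Pi.single c₀ 1)).det := by
    rw [hBlast c₀, hsq, huU]
  refine ⟨U, V, ?_, ?_, ?_⟩
  · -- Goal 1
    have hle : Ideal.span {N.det} ≤ Ideal.span {N.det, U} :=
      Ideal.span_mono (by simp)
    refine le_antisymm (Ideal.span_le.mpr ?_) (Ideal.span_le.mpr ?_)
    · rintro x hx
      simp only [Set.mem_insert_iff, Set.mem_singleton_iff] at hx
      rcases hx with rfl | rfl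
      · rw [SetLike.mem_coe, Matrix.det_succ_row N (Fin.last r)]
        refine Ideal.sum_mem _ (fun c _ => ?_)
        have h2 := bgen_eq M c
        rw [← hN] at h2
        rw [← h2]
        exact Ideal.mul_mem_left _ _ (Ideal.subset_span ⟨c, rfl⟩)
      · exact Ideal.subset_span ⟨c₀, huU.symm⟩
    · rintro x ⟨c, rfl⟩
      rw [SetLike.mem_coe]
      show ((M.submatrix (fun i : Fin r => i.castSucc.castSucc) id).submatrix
        id c.succAbove).det ∈ Ideal.span {N.det, U}
      have h1 := KD (Pi.single c₀ 1) (Pi.single c 1) k₀ (Fin.last r)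
      have hkey : (N.updateRow k₀ (Pi.single c₀ 1)).det *
          (N.updateRow (Fin.last r) (Pi.single c 1)).det ∈ Ideal.span {N.det, U} := by
        rw [show (N.updateRow k₀ (Pi.single c₀ 1)).det *
            (N.updateRow (Fin.last r) (Pi.single c 1)).det
          = ((N.updateRow k₀ (Pi.single c₀ 1)).det *
              (N.updateRow (Fin.last r) (Pi.single c 1)).det
            - (N.updateRow (Fin.last r) (Pi.single c₀ 1)).det *
              (N.updateRow k₀ (Pi.single c 1)).det)
            + (N.updateRow (Fin.last r) (Pi.single c₀ 1)).det *
              (N.updateRow k₀ (Pi.single c 1)).det from by ring]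
        refine Ideal.add_mem _ (hle h1) ?_
        rw [hBlast c₀, ← huU]
        exact Ideal.mul_mem_right _ _ (Ideal.mul_mem_left _ _
          (Ideal.subset_span (by simp)))
      have hc2 : (N.updateRow (Fin.last r) (Pi.single c 1)).det
          ∈ Ideal.span {N.det, U} := (Ideal.unit_mul_mem_iff_mem _ hUB).mp hkey
      have h3 : ((M.submatrix (fun i : Fin r => i.castSucc.castSucc) id).submatrix
          id c.succAbove).det
          = (-1 : O) ^ (r + (c : ℕ)) *
            (N.updateRow (Fin.last r) (Pi.single c 1)).det := by
        rw [hBlast c, hsq]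
      rw [h3]
      exact Ideal.mul_mem_left _ _ hc2
  · -- Goal 2
    have hle : Ideal.span {N.det} ≤ Ideal.span {N.det, V} :=
      Ideal.span_mono (by simp)
    refine le_antisymm (Ideal.span_le.mpr ?_) (Ideal.span_le.mpr ?_)
    · rintro x hx
      simp only [Set.mem_insert_iff, Set.mem_singleton_iff] at hx
      rcases hx with rfl | rfl
      · exact Ideal.subset_span ⟨Fin.last (r + 1), hlastgen⟩
      · exact Ideal.subset_span ⟨k₀.castSucc, hvV.symm⟩
    · rintro x ⟨k, rfl⟩
      rw [SetLike.mem_coe]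
      induction k using Fin.lastCases with
      | last =>
          show (M.submatrix (Fin.last (r + 1)).succAbove id).det
            ∈ Ideal.span {N.det, V}
          rw [hlastgen]
          exact Ideal.subset_span (by simp)
      | cast j =>
          show (M.submatrix (j.castSucc).succAbove id).det ∈ Ideal.span {N.det, V}
          have h1 := KD (Pi.single c₀ 1) mrow k₀ j
          have hkey : (N.updateRow k₀ (Pi.single c₀ 1)).det *
              (N.updateRow j mrow).det ∈ Ideal.span {N.det, V} := by
            rw [show (N.updateRow k₀ (Pi.single c₀ 1)).det * (N.updateRow j mrow).det
              = ((N.updateRow k₀ (Pi.single c₀ 1)).det * (N.updateRow j mrow).det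
                - (N.updateRow j (Pi.single c₀ 1)).det * (N.updateRow k₀ mrow).det)
                + (N.updateRow j (Pi.single c₀ 1)).det * (N.updateRow k₀ mrow).det
              from by ring]
            refine Ideal.add_mem _ (hle h1) ?_
            rw [hskey]
            exact Ideal.mul_mem_left _ _ (Ideal.mul_mem_left _ _
              (Ideal.subset_span (by simp)))
          have hsj : (N.updateRow j mrow).det ∈ Ideal.span {N.det, V} :=
            (Ideal.unit_mul_mem_iff_mem _ hUB).mp hkey
          rw [hsrow j]
          exact Ideal.mul_mem_left _ _ hsj
  · -- Goal 3
    have ht : (M.submatrix ((Fin.last r).castSucc.succAbove) id).det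
        = (N.updateRow (Fin.last r) mrow).det := by
      rw [hsrow (Fin.last r), Fin.val_last, ← two_mul, pow_mul, neg_one_sq, one_pow,
        one_mul]
    have hXW := KD (Pi.single c₀ 1) mrow k₀ (Fin.last r)
    have hUVX : U * V = (-1 : O) ^ (r + (c₀ : ℕ)) * ((-1 : O) ^ (r + (k₀ : ℕ)) *
        ((N.updateRow (Fin.last r) (Pi.single c₀ 1)).det *
          (N.updateRow k₀ mrow).det)) := by
      have hV2 : V = (-1 : O) ^ (r + (k₀ : ℕ)) * (N.updateRow k₀ mrow).det := by
        rw [hskey, hsq]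
      rw [hU2, hV2]
      ring
    refine le_antisymm (Ideal.span_le.mpr ?_) (Ideal.span_le.mpr ?_)
    · rintro x hx
      simp only [Set.mem_insert_iff, Set.mem_singleton_iff] at hx
      rcases hx with rfl | rfl
      · exact Ideal.subset_span (by simp)
      · rw [SetLike.mem_coe, hUVX]
        refine Ideal.mul_mem_left _ _ (Ideal.mul_mem_left _ _ ?_)
        rw [show (N.updateRow (Fin.last r) (Pi.single c₀ 1)).det *
            (N.updateRow k₀ mrow).det
          = -((N.updateRow k₀ (Pi.single c₀ 1)).det *
              (N.updateRow (Fin.last r) mrow).det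
            - (N.updateRow (Fin.last r) (Pi.single c₀ 1)).det *
              (N.updateRow k₀ mrow).det)
            + (N.updateRow k₀ (Pi.single c₀ 1)).det *
              (N.updateRow (Fin.last r) mrow).det from by ring]
        have hle : Ideal.span {N.det} ≤ Ideal.span {N.det,
            (M.submatrix ((Fin.last r).castSucc.succAbove) id).det} :=
          Ideal.span_mono (by simp)
        refine Ideal.add_mem _ (hle (neg_mem hXW)) ?_
        rw [← ht]
        exact Ideal.mul_mem_left _ _ (Ideal.subset_span (by simp))
    · rintro x hx
      simp only [Set.mem_insert_iff, Set.mem_singleton_iff] at hx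
      rcases hx with rfl | rfl
      · exact Ideal.subset_span (by simp)
      · rw [SetLike.mem_coe]
        have hle : Ideal.span {N.det} ≤ Ideal.span {N.det, U * V} :=
          Ideal.span_mono (by simp)
        have hX : (N.updateRow (Fin.last r) (Pi.single c₀ 1)).det *
            (N.updateRow k₀ mrow).det
            = (-1 : O) ^ (r + (c₀ : ℕ)) * ((-1 : O) ^ (r + (k₀ : ℕ)) * (U * V)) := by
          rw [hUVX, show ((-1 : O) ^ (r + (c₀ : ℕ)) * ((-1 : O) ^ (r + (k₀ : ℕ)) *
              ((-1 : O) ^ (r + (c₀ : ℕ)) * ((-1 : O) ^ (r + (k₀ : ℕ)) *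
                ((N.updateRow (Fin.last r) (Pi.single c₀ 1)).det *
                  (N.updateRow k₀ mrow).det)))))
            = (-1 : O) ^ (r + (c₀ : ℕ)) * ((-1 : O) ^ (r + (c₀ : ℕ)) *
              ((-1 : O) ^ (r + (k₀ : ℕ)) * ((-1 : O) ^ (r + (k₀ : ℕ)) *
                ((N.updateRow (Fin.last r) (Pi.single c₀ 1)).det *
                  (N.updateRow k₀ mrow).det)))) from by ring, hsq, hsq]
        have hmem : (N.updateRow k₀ (Pi.single c₀ 1)).det *
            (N.updateRow (Fin.last r) mrow).det ∈ Ideal.span {N.det, U * V} := by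
          rw [show (N.updateRow k₀ (Pi.single c₀ 1)).det *
              (N.updateRow (Fin.last r) mrow).det
            = ((N.updateRow k₀ (Pi.single c₀ 1)).det *
                (N.updateRow (Fin.last r) mrow).det
              - (N.updateRow (Fin.last r) (Pi.single c₀ 1)).det *
                (N.updateRow k₀ mrow).det)
              + (N.updateRow (Fin.last r) (Pi.single c₀ 1)).det *
                (N.updateRow k₀ mrow).det from by ring]
          refine Ideal.add_mem _ (hle hXW) ?_
          rw [hX]
          exact Ideal.mul_mem_left _ _ (Ideal.mul_mem_left _ _
            (Ideal.subset_span (by simp)))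
        have := (Ideal.unit_mul_mem_iff_mem _ hUB).mp hmem
        rw [ht]
        exact this
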